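/- Assume the invariant setting with S_A ≠ ∅, and write p_A = max S_A. Assume a_A ∈ L_A \ S_A, p_A < a_B, and every element of S_B is less than a_B (case 5 of the case analysis). Then: S'_A = S_A \ {p_A}; S'_B = S_B; p_A is the A-side peek, i.e. p_A = min((L_A \ {a_A}) \ S'_A), and p_A is less than every element of (L_B ∪ {a_B}) \ S'_B; and H_h(L') = H_h(L_A ∪ L_B) = S'_A ∪ {p_A} ∪ S_B. -/

import Mathlib

/-- `smallSet m L` is `H_m(L)`: the set of the `m` smallest elements of the finset `L`
(the first `m` entries of the increasing enumeration of `L`). -/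
def smallSet {α : Type*} [LinearOrder α] (m : ℕ) (L : Finset α) : Finset α :=
  ((L.sort (· ≤ ·)).take m).toFinset

section
variable {α : Type*} [LinearOrder α] {m : ℕ} {L S : Finset α}

lemma smallSet_subset : smallSet m L ⊆ L := by
  intro x hx
  simp only [smallSet, List.mem_toFinset] at hx
  simpa [Finset.mem_sort] using List.take_subset m _ hx

lemma smallSet_card (hm : m ≤ L.card) : (smallSet m L).card = m := by
  have hnd : ((L.sort (· ≤ ·)).take m).Nodup :=
    (L.sort_nodup (· ≤ ·)).sublist (List.take_sublist m _)
  simp [smallSet, List.toFinset_card_of_nodup hnd, List.length_take,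
    Finset.length_sort, hm]

lemma smallSet_lt {x y : α} (hx : x ∈ smallSet m L) (hy : y ∈ L)
    (hy' : y ∉ smallSet m L) : x < y := by
  simp only [smallSet, List.mem_toFinset] at hx hy'
  set l := L.sort (· ≤ ·) with hl
  have hsorted : l.Pairwise (· < ·) := L.sortedLT_sort.pairwise
  have hyl : y ∈ l := (Finset.mem_sort _).mpr hy
  have hyd : y ∈ l.drop m := by
    rw [← List.take_append_drop m l] at hyl
    rcases List.mem_append.mp hyl with h | h
    · exact absurd h hy'
    · exact h
  have hp : List.Pairwise (· < ·) (l.take m ++ l.drop m) := by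
    rw [List.take_append_drop]; exact hsorted
  exact (List.pairwise_append.mp hp).2.2 x hx y hyd

lemma smallSet_eq_of (hSL : S ⊆ L) (hcard : S.card = m) (hm : m ≤ L.card)
    (hlt : ∀ x ∈ S, ∀ y ∈ L, y ∉ S → x < y) : smallSet m L = S := by
  have hc : (smallSet m L).card = m := smallSet_card hm
  have hsub : smallSet m L ⊆ S := by
    intro x hx
    by_contra hxS
    have hns : ¬ S ⊆ smallSet m L := by
      intro hss
      have := Finset.eq_of_subset_of_card_le hss (by omega)
      rw [this] at hxS
      exact hxS hx
    obtain ⟨y, hyS, hyn⟩ := Finset.not_subset.mp hns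
    exact absurd (smallSet_lt hx (hSL hyS) hyn)
      (not_lt.mpr (hlt y hyS x (smallSet_subset hx) hxS).le)
  exact Finset.eq_of_subset_of_card_le hsub (by omega)

end

/-- case 5 of the case analysis.  Invariant setting: `L_A, L_B` disjoint
with `|L_A| + |L_B| = 2h+1`, `S_A ⊆ L_A`, `S_B ⊆ L_B`, `S_A ∪ S_B = H_h(L_A ∪ L_B)`,
`a_A ∈ L_A`, `a_B ∉ L_A ∪ L_B`; `L' = (L_A \ {a_A}) ∪ L_B ∪ {a_B}`; updated small sets
`S'_A = H_{|S_A|-1}(L_A \ {a_A})` and `S'_B = H_{|S_B|}(L_B ∪ {a_B})`.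
Assume `S_A ≠ ∅`, `a_A ∈ L_A \ S_A`, `p_A = max S_A < a_B`, and every element of `S_B`
is less than `a_B`.  Then `S'_A = S_A \ {p_A}`, `S'_B = S_B`, `p_A` is the A-side peek
(`p_A = min((L_A \ {a_A}) \ S'_A)`) and is less than every element of
`(L_B ∪ {a_B}) \ S'_B`, and `H_h(L') = H_h(L_A ∪ L_B) = S'_A ∪ {p_A} ∪ S_B`. -/
theorem invariant_case5 {α : Type*} [LinearOrder α] (h : ℕ)
    (LA LB SA SB : Finset α) (hdisj : Disjoint LA LB)
    (hcard : LA.card + LB.card = 2 * h + 1)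
    (hSA : SA ⊆ LA) (hSB : SB ⊆ LB)
    (hinv : SA ∪ SB = smallSet h (LA ∪ LB))
    (aA aB : α) (haA : aA ∈ LA) (haB : aB ∉ LA ∪ LB)
    (hSAne : SA.Nonempty)
    (h1 : aA ∈ LA \ SA)
    (h2 : SA.max' hSAne < aB)
    (h3 : ∀ x ∈ SB, x < aB) :
    smallSet (SA.card - 1) (LA \ {aA}) = SA \ {SA.max' hSAne} ∧
    smallSet SB.card (LB ∪ {aB}) = SB ∧
    ((LA \ {aA}) \ smallSet (SA.card - 1) (LA \ {aA})).min =
      (SA.max' hSAne : WithTop α) ∧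
    (∀ x ∈ (LB ∪ {aB}) \ smallSet SB.card (LB ∪ {aB}), SA.max' hSAne < x) ∧
    smallSet h ((LA \ {aA}) ∪ LB ∪ {aB}) = smallSet h (LA ∪ LB) ∧
    smallSet h ((LA \ {aA}) ∪ LB ∪ {aB}) =
      smallSet (SA.card - 1) (LA \ {aA}) ∪ {SA.max' hSAne} ∪ SB := by
  set p := SA.max' hSAne with hp
  have hpSA : p ∈ SA := SA.max'_mem hSAne
  have haASA : aA ∉ SA := (Finset.mem_sdiff.mp h1).2
  have haBLA : aB ∉ LA := fun hx => haB (Finset.mem_union_left _ hx)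
  have haBLB : aB ∉ LB := fun hx => haB (Finset.mem_union_right _ hx)
  have hdisjS : Disjoint SA SB := hdisj.mono hSA hSB
  have hcardLL : (LA ∪ LB).card = 2 * h + 1 := by
    rw [Finset.card_union_of_disjoint hdisj]; exact hcard
  have hh : h ≤ (LA ∪ LB).card := by omega
  have hcardS : SA.card + SB.card = h := by
    have := smallSet_card (L := LA ∪ LB) hh
    rw [← hinv, Finset.card_union_of_disjoint hdisjS] at this
    exact this
  have key : ∀ x ∈ SA ∪ SB, ∀ y ∈ LA ∪ LB, y ∉ SA ∪ SB → x < y := by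
    intro x hx y hy hy'
    rw [hinv] at hx hy'
    exact smallSet_lt hx hy hy'
  have hSAc : 1 ≤ SA.card := Finset.card_pos.mpr hSAne
  -- Claim 1
  have c1 : smallSet (SA.card - 1) (LA \ {aA}) = SA \ {p} := by
    apply smallSet_eq_of
    · intro x hx
      rw [Finset.mem_sdiff, Finset.mem_singleton] at hx ⊢
      exact ⟨hSA hx.1, fun hxa => haASA (hxa ▸ hx.1)⟩
    · rw [Finset.sdiff_singleton_eq_erase, Finset.card_erase_of_mem hpSA]
    · have h1' : ({aA} : Finset α) ⊆ LA := Finset.singleton_subset_iff.mpr haA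
      rw [Finset.card_sdiff_of_subset h1', Finset.card_singleton]
      have := Finset.card_le_card hSA
      omega
    · intro x hx y hy hy'
      rw [Finset.mem_sdiff, Finset.mem_singleton] at hx hy hy'
      push_neg at hy'
      rcases eq_or_ne y p with rfl | hyp
      · exact lt_of_le_of_ne (SA.le_max' x hx.1) hx.2
      · have hyS : y ∉ SA := fun hyS => hyp (hy' hyS)
        have hyB : y ∉ SB := fun hyS => (Finset.disjoint_left.mp hdisj) hy.1 (hSB hyS)
        exact key x (Finset.mem_union_left _ hx.1) y (Finset.mem_union_left _ hy.1)
          (by simp [hyS, hyB])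
  -- Claim 2
  have c2 : smallSet SB.card (LB ∪ {aB}) = SB := by
    apply smallSet_eq_of
    · exact hSB.trans (Finset.subset_union_left)
    · rfl
    · calc SB.card ≤ LB.card := Finset.card_le_card hSB
        _ ≤ (LB ∪ {aB}).card := Finset.card_le_card Finset.subset_union_left
    · intro x hx y hy hy'
      rcases Finset.mem_union.mp hy with hyB | hya
      · have hyA : y ∉ SA := fun hyS => (Finset.disjoint_left.mp hdisj) (hSA hyS) hyB
        exact key x (Finset.mem_union_right _ hx) y (Finset.mem_union_right _ hyB)
          (by simp [hyA, hy'])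
      · rw [Finset.mem_singleton] at hya
        exact hya ▸ h3 x hx
  -- Claim 3
  have c3 : ((LA \ {aA}) \ smallSet (SA.card - 1) (LA \ {aA})).min = (p : WithTop α) := by
    rw [c1]
    set T := (LA \ {aA}) \ (SA \ {p}) with hT
    have hpT : p ∈ T := by
      rw [hT]
      simp only [Finset.mem_sdiff, Finset.mem_singleton, not_and, not_not]
      exact ⟨⟨hSA hpSA, fun hpa => haASA (hpa ▸ hpSA)⟩, fun _ => trivial⟩
    have hmin : ∀ y ∈ T, p ≤ y := by
      intro y hy
      rw [hT] at hy
      simp only [Finset.mem_sdiff, Finset.mem_singleton] at hy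
      rcases eq_or_ne y p with rfl | hyp
      · exact le_refl _
      · have hyS : y ∉ SA := fun hyS => hy.2 ⟨hyS, hyp⟩
        have hyB : y ∉ SB := fun hyS => (Finset.disjoint_left.mp hdisj) hy.1.1 (hSB hyS)
        exact (key p (Finset.mem_union_left _ hpSA) y (Finset.mem_union_left _ hy.1.1)
          (by simp [hyS, hyB])).le
    apply le_antisymm
    · exact Finset.min_le hpT
    · exact Finset.le_min (fun y hy => WithTop.coe_le_coe.mpr (hmin y hy))
  -- Claim 4
  have c4 : ∀ x ∈ (LB ∪ {aB}) \ smallSet SB.card (LB ∪ {aB}), p < x := by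
    rw [c2]
    intro x hx
    rw [Finset.mem_sdiff, Finset.mem_union, Finset.mem_singleton] at hx
    rcases hx.1 with hxB | rfl
    · have hxA : x ∉ SA := fun hyS => (Finset.disjoint_left.mp hdisj) (hSA hyS) hxB
      exact key p (Finset.mem_union_left _ hpSA) x (Finset.mem_union_right _ hxB)
        (by simp [hxA, hx.2])
    · exact h2
  -- Claim 5
  have hsubL' : SA ∪ SB ⊆ (LA \ {aA}) ∪ LB ∪ {aB} := by
    intro x hx
    rcases Finset.mem_union.mp hx with hxA | hxB
    · exact Finset.mem_union_left _ (Finset.mem_union_left _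
        (Finset.mem_sdiff.mpr ⟨hSA hxA, by simp; exact fun hxa => haASA (hxa ▸ hxA)⟩))
    · exact Finset.mem_union_left _ (Finset.mem_union_right _ (hSB hxB))
  have c5 : smallSet h ((LA \ {aA}) ∪ LB ∪ {aB}) = SA ∪ SB := by
    apply smallSet_eq_of hsubL'
    · rw [Finset.card_union_of_disjoint hdisjS]; exact hcardS
    · calc h = (SA ∪ SB).card := by
            rw [Finset.card_union_of_disjoint hdisjS]; omega
        _ ≤ _ := Finset.card_le_card hsubL'
    · intro x hx y hy hy'
      rcases Finset.mem_union.mp hy with hy0 | hya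
      · have hyLL : y ∈ LA ∪ LB := by
          rcases Finset.mem_union.mp hy0 with h' | h'
          · exact Finset.mem_union_left _ (Finset.mem_sdiff.mp h').1
          · exact Finset.mem_union_right _ h'
        exact key x hx y hyLL hy'
      · rw [Finset.mem_singleton] at hya
        subst hya
        rcases Finset.mem_union.mp hx with hxA | hxB
        · exact lt_of_le_of_lt (SA.le_max' x hxA) h2
        · exact h3 x hxB
  have hinv' : smallSet h (LA ∪ LB) = SA ∪ SB := hinv.symm
  refine ⟨c1, c2, c3, c4, by rw [c5, hinv'], ?_⟩
  rw [c5, c1]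
  have : SA \ {p} ∪ {p} = SA :=
    Finset.sdiff_union_of_subset (Finset.singleton_subset_iff.mpr hpSA)
  rw [this]
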